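/- For a regular cardinal κ, if A ≤_κ B and B ≤_κ C for partial orders A ≤ B ≤ C, then A ≤_κ C. -/
import Mathlib


universe u v

open Cardinal

/-- `f` is a κ-Freese-Nation mapping on the partial order `P`. -/
def IsFNMap (κ : Cardinal.{u}) {P : Type u} [PartialOrder P] (f : P → Set P) : Prop :=
  (∀ a, #(f a) < κ) ∧
    ∀ a b : P, a ≤ b → ∃ c, c ∈ f a ∧ c ∈ f b ∧ a ≤ c ∧ c ≤ b

/-- The partial order `P` has the κ-Freese-Nation property. -/
def HasFN (κ : Cardinal.{u}) (P : Type u) [PartialOrder P] : Prop :=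
  ∃ f : P → Set P, IsFNMap κ f

/-- `A` is a κ-substructure of the ambient partial order `P`: for every `b : P`,
`{a ∈ A | a ≤ b}` has a cofinal subset of size `< κ` and `{a ∈ A | b ≤ a}` has a
coinitial subset of size `< κ`. -/
def SubKappa (κ : Cardinal.{u}) {P : Type u} [PartialOrder P] (A : Set P) : Prop :=
  ∀ b : P,
    (∃ U : Set P, U ⊆ A ∧ #U < κ ∧ (∀ u ∈ U, u ≤ b) ∧
      (∀ a ∈ A, a ≤ b → ∃ u ∈ U, a ≤ u)) ∧
    (∃ V : Set P, V ⊆ A ∧ #V < κ ∧ (∀ v ∈ V, b ≤ v) ∧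
      (∀ a ∈ A, b ≤ a → ∃ v ∈ V, v ≤ a))

/-- `A ≤_κ B` for two subsets of an ambient partial order:
`A ⊆ B` and `A` is a κ-substructure of the suborder `B`. -/
def RelSubKappa (κ : Cardinal.{u}) {P : Type u} [PartialOrder P] (A B : Set P) : Prop :=
  A ⊆ B ∧ SubKappa κ {x : B | (x : P) ∈ A}


/-- For regular κ, if A ≤_κ B and B ≤_κ C then A ≤_κ C. -/
theorem statement3 (κ : Cardinal.{u}) (hκ : κ.IsRegular) {C : Type u} [PartialOrder C]
    (A B : Set C) (hAB : A ⊆ B)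
    (h1 : SubKappa κ {x : B | (x : C) ∈ A}) (h2 : SubKappa κ B) :
    SubKappa κ A := by
  intro b
  constructor
  · obtain ⟨U, hUB, hUcard, hUle, hUcof⟩ := (h2 b).1
    choose V hVA hVcard hVle hVcof using fun u : U => (h1 ⟨u.1, hUB u.2⟩).1
    refine ⟨⋃ u : U, (fun x : B => (x : C)) '' V u, ?_, ?_, ?_, ?_⟩
    · rintro x hx
      simp only [Set.mem_iUnion, Set.mem_image] at hx
      obtain ⟨u, y, hy, rfl⟩ := hx
      exact hVA u hy
    · rw [card_iUnion_lt_iff_forall_of_isRegular hκ hUcard]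
      intro u
      exact lt_of_le_of_lt Cardinal.mk_image_le (hVcard u)
    · rintro x hx
      simp only [Set.mem_iUnion, Set.mem_image] at hx
      obtain ⟨u, y, hy, rfl⟩ := hx
      exact le_trans (hVle u y hy) (hUle u u.2)
    · intro a ha hab
      obtain ⟨u, huU, hau⟩ := hUcof a (hAB ha) hab
      obtain ⟨v, hv, hav⟩ := hVcof ⟨u, huU⟩ ⟨a, hAB ha⟩ ha hau
      exact ⟨v, Set.mem_iUnion.2 ⟨⟨u, huU⟩, Set.mem_image_of_mem _ hv⟩, hav⟩
  · obtain ⟨U, hUB, hUcard, hUge, hUcoi⟩ := (h2 b).2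
    choose V hVA hVcard hVge hVcoi using fun u : U => (h1 ⟨u.1, hUB u.2⟩).2
    refine ⟨⋃ u : U, (fun x : B => (x : C)) '' V u, ?_, ?_, ?_, ?_⟩
    · rintro x hx
      simp only [Set.mem_iUnion, Set.mem_image] at hx
      obtain ⟨u, y, hy, rfl⟩ := hx
      exact hVA u hy
    · rw [card_iUnion_lt_iff_forall_of_isRegular hκ hUcard]
      intro u
      exact lt_of_le_of_lt Cardinal.mk_image_le (hVcard u)
    · rintro x hx
      simp only [Set.mem_iUnion, Set.mem_image] at hx
      obtain ⟨u, y, hy, rfl⟩ := hx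
      exact le_trans (hUge u u.2) (hVge u y hy)
    · intro a ha hab
      obtain ⟨u, huU, hau⟩ := hUcoi a (hAB ha) hab
      obtain ⟨v, hv, hav⟩ := hVcoi ⟨u, huU⟩ ⟨a, hAB ha⟩ ha hau
      exact ⟨v, Set.mem_iUnion.2 ⟨⟨u, huU⟩, Set.mem_image_of_mem _ hv⟩, hav⟩
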